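/- Let m, n be positive integers and let F be a set of edges of the m×n grid graph. Then F is a forcing set for every proper 3-coloring of the grid graph (i.e., F is controlling) if and only if the spanning subgraph of the grid graph with vertex set V and edge set F is connected (equivalently, F contains the edge set of a spanning tree of the grid graph). -/

import Mathlib

/-- Two vertices of the `m × n` grid graph are adjacent:
`(i,j)` is adjacent to `(i',j')` iff `|i-i'| + |j-j'| = 1`. -/
def GridAdj {m n : ℕ} (u v : Fin m × Fin n) : Prop :=
  |(u.1.val : ℤ) - (v.1.val : ℤ)| + |(u.2.val : ℤ) - (v.2.val : ℤ)| = 1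

/-- A proper `3`-coloring of the `m × n` grid graph. -/
def IsProperColoring {m n : ℕ} (c : Fin m × Fin n → ZMod 3) : Prop :=
  ∀ u v, GridAdj u v → c u ≠ c v

/-- The set of (unordered) edges of the `m × n` grid graph. -/
def GridEdges (m n : ℕ) : Set (Sym2 (Fin m × Fin n)) :=
  {e | ∃ u v, GridAdj u v ∧ e = s(u, v)}

/-- `F` is a forcing set for the proper `3`-coloring `c`: the only proper
`3`-coloring agreeing with `c` at the base vertex `v₀ = (0,0)` and having the same
color differences as `c` across every edge of `F` is `c` itself. -/
def IsForcing {m n : ℕ} [NeZero m] [NeZero n] (c : Fin m × Fin n → ZMod 3)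
    (F : Set (Sym2 (Fin m × Fin n))) : Prop :=
  ∀ c' : Fin m × Fin n → ZMod 3, IsProperColoring c' →
    c' (0, 0) = c (0, 0) →
    (∀ u v : Fin m × Fin n, GridAdj u v → s(u, v) ∈ F → c' v - c' u = c v - c u) →
    c' = c

/-- The checkerboard `3`-coloring of the grid, corresponding to the standard
Miura-ori mountain-valley assignment. -/
def checkerboard {m n : ℕ} : Fin m × Fin n → ZMod 3 :=
  fun v => if (v.1.val + v.2.val) % 2 = 0 then 0 else 1

/-- The spanning subgraph of the `m × n` grid graph whose edges are the grid edges
belonging to `F`. -/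
def spanningSubgraph {m n : ℕ} (F : Set (Sym2 (Fin m × Fin n))) :
    SimpleGraph (Fin m × Fin n) where
  Adj u v := GridAdj u v ∧ s(u, v) ∈ F
  symm := by
    constructor
    intro u v h
    refine ⟨?_, ?_⟩
    · unfold GridAdj at h ⊢
      rw [abs_sub_comm, abs_sub_comm ((v.2.val : ℤ))]
      exact h.1
    · rw [Sym2.eq_swap]
      exact h.2
  loopless := by
    constructor
    intro v h
    have h1 := h.1
    unfold GridAdj at h1
    simp at h1

section Aux
variable {m n : ℕ}

private def gdist (u v : Fin m × Fin n) : ℕ :=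
  ((u.1.1 : ℤ) - v.1.1).natAbs + ((u.2.1 : ℤ) - v.2.1).natAbs
private def gpar (v : Fin m × Fin n) : ℕ := (v.1.1 + v.2.1) % 2
private lemma gridAdj_iff (u v : Fin m × Fin n) : GridAdj u v ↔ gdist u v = 1 := by
  unfold GridAdj gdist
  rw [Int.abs_eq_natAbs, Int.abs_eq_natAbs]
  omega
private lemma gdist_self (v : Fin m × Fin n) : gdist v v = 0 := by unfold gdist; omega
private lemma gdist_eq_zero {u v : Fin m × Fin n} (h : gdist u v = 0) : u = v := by
  unfold gdist at h
  exact Prod.ext (Fin.ext (by omega)) (Fin.ext (by omega))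
private lemma gdist_triangle (u v w : Fin m × Fin n) :
    gdist u w ≤ gdist u v + gdist v w := by
  unfold gdist; omega
private lemma gdist_parity (u v : Fin m × Fin n) :
    gdist u v % 2 = (gpar u + gpar v) % 2 := by
  unfold gdist gpar; omega

private noncomputable def gh (B : Set (Fin m × Fin n)) (v : Fin m × Fin n) : ℕ :=
  sInf ((fun k => gdist v k + gpar k) '' B)

private lemma gh_le {B : Set (Fin m × Fin n)} {k : Fin m × Fin n} (hk : k ∈ B)
    (v : Fin m × Fin n) : gh B v ≤ gdist v k + gpar k :=
  Nat.sInf_le ⟨k, hk, rfl⟩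

private lemma gh_exists {B : Set (Fin m × Fin n)} (hB : B.Nonempty) (v : Fin m × Fin n) :
    ∃ k ∈ B, gh B v = gdist v k + gpar k := by
  obtain ⟨k, hk, he⟩ := Nat.sInf_mem (hB.image (fun k => gdist v k + gpar k))
  exact ⟨k, hk, he.symm⟩

private lemma le_gh {B : Set (Fin m × Fin n)} (hB : B.Nonempty) (v : Fin m × Fin n) (a : ℕ)
    (h : ∀ k ∈ B, a ≤ gdist v k + gpar k) : a ≤ gh B v := by
  obtain ⟨k, hk, he⟩ := gh_exists hB v
  rw [he]; exact h k hk

private lemma gh_parity {B : Set (Fin m × Fin n)} (hB : B.Nonempty) (v : Fin m × Fin n) :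
    gh B v % 2 = gpar v := by
  obtain ⟨k, hk, he⟩ := gh_exists hB v
  have := gdist_parity v k
  have h1 : gpar v < 2 := Nat.mod_lt _ (by norm_num)
  have h2 : gpar k < 2 := Nat.mod_lt _ (by norm_num)
  omega

private lemma gh_mem {B : Set (Fin m × Fin n)} (hB : B.Nonempty) {v : Fin m × Fin n}
    (hv : v ∈ B) : gh B v = gpar v := by
  have h1 : gh B v ≤ gpar v := by
    have := gh_le hv v
    rw [gdist_self] at this
    omega
  have h2 : gpar v ≤ gh B v := by
    apply le_gh hB
    intro k hk
    rcases Nat.eq_zero_or_pos (gdist v k) with h0 | hpos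
    · obtain rfl := gdist_eq_zero h0
      omega
    · have : gpar v < 2 := Nat.mod_lt _ (by norm_num)
      omega
  omega

private lemma gh_pos {B : Set (Fin m × Fin n)} (hB : B.Nonempty) {u : Fin m × Fin n}
    (hu : u ∉ B) : 1 ≤ gh B u := by
  apply le_gh hB
  intro k hk
  have : gdist u k ≠ 0 := fun h0 => hu ((gdist_eq_zero h0) ▸ hk)
  omega

private lemma gh_lip {B : Set (Fin m × Fin n)} (hB : B.Nonempty) {u v : Fin m × Fin n}
    (hd : gdist u v = 1) : gh B u ≤ gh B v + 1 := by
  obtain ⟨k, hk, he⟩ := gh_exists hB v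
  have h1 := gh_le hk u
  have h2 := gdist_triangle u v k
  omega

private lemma gh_step {B : Set (Fin m × Fin n)} (hB : B.Nonempty) {u v : Fin m × Fin n}
    (hd : gdist u v = 1) : gh B u = gh B v + 1 ∨ gh B v = gh B u + 1 := by
  have h1 := gh_lip hB hd
  have h2 := gh_lip hB (by rw [← hd]; unfold gdist; omega : gdist v u = 1)
  have h3 := gh_parity hB u
  have h4 := gh_parity hB v
  have h5 := gdist_parity u v
  omega

private lemma gh_cut {B : Set (Fin m × Fin n)} (hB : B.Nonempty) {u v : Fin m × Fin n}
    (hu : u ∉ B) (hv : v ∈ B) (hd : gdist u v = 1) : gh B u = gh B v + 1 := by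
  have h1 := gh_step hB hd
  have h2 := gh_mem hB hv
  have h3 := gh_pos hB hu
  have h4 : gpar v < 2 := Nat.mod_lt _ (by norm_num)
  omega

private noncomputable def gcol (B : Set (Fin m × Fin n)) (v : Fin m × Fin n) : ZMod 3 :=
  (gh B v : ZMod 3)

open Classical in
private noncomputable def gcol' (B : Set (Fin m × Fin n)) (v : Fin m × Fin n) : ZMod 3 :=
  gcol B v + (if v ∈ B then 2 else 0)

private lemma gcol_step {B : Set (Fin m × Fin n)} (hB : B.Nonempty) {u v : Fin m × Fin n}
    (hd : gdist u v = 1) : gcol B u = gcol B v + 1 ∨ gcol B v = gcol B u + 1 := by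
  rcases gh_step hB hd with h | h
  · left; unfold gcol; rw [h]; push_cast; ring
  · right; unfold gcol; rw [h]; push_cast; ring

private lemma gcol_cut {B : Set (Fin m × Fin n)} (hB : B.Nonempty) {u v : Fin m × Fin n}
    (hu : u ∉ B) (hv : v ∈ B) (hd : gdist u v = 1) : gcol B u = gcol B v + 1 := by
  unfold gcol; rw [gh_cut hB hu hv hd]; push_cast; ring

private lemma gcol_proper {B : Set (Fin m × Fin n)} (hB : B.Nonempty) :
    IsProperColoring (gcol B) := by
  intro u v hadj
  have hd := (gridAdj_iff u v).mp hadj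
  rcases gcol_step hB hd with h | h
  · rw [h]; exact (by decide : ∀ x : ZMod 3, x + 1 ≠ x) _
  · intro heq; rw [heq] at h
    exact (by decide : ∀ x : ZMod 3, x + 1 ≠ x) _ h.symm

private lemma gcol'_proper {B : Set (Fin m × Fin n)} (hB : B.Nonempty) :
    IsProperColoring (gcol' B) := by
  classical
  intro u v hadj
  have hd := (gridAdj_iff u v).mp hadj
  have hd' : gdist v u = 1 := by rw [← hd]; unfold gdist; omega
  show gcol B u + (if u ∈ B then 2 else 0) ≠ gcol B v + (if v ∈ B then 2 else 0)
  by_cases hu : u ∈ B <;> by_cases hv : v ∈ B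
  · rw [if_pos hu, if_pos hv]
    intro h
    exact gcol_proper hB u v hadj ((by decide : ∀ x y : ZMod 3, x + 2 = y + 2 → x = y) _ _ h)
  · have hc : gcol B v = gcol B u + 1 := gcol_cut hB hv hu hd'
    rw [if_pos hu, if_neg hv, hc]
    exact (by decide : ∀ x : ZMod 3, x + 2 ≠ (x + 1) + 0) _
  · have hc : gcol B u = gcol B v + 1 := gcol_cut hB hu hv hd
    rw [if_neg hu, if_pos hv, hc]
    exact (by decide : ∀ x : ZMod 3, (x + 1) + 0 ≠ x + 2) _
  · rw [if_neg hu, if_neg hv]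
    intro h
    exact gcol_proper hB u v hadj ((by decide : ∀ x y : ZMod 3, x + 0 = y + 0 → x = y) _ _ h)

end Aux

/-- **Theorem 5 of the paper.** A set `F` of grid edges is controlling (a forcing
set for every proper 3-coloring of the `m × n` grid graph) if and only if the
spanning subgraph with edge set `F` is connected, i.e. `F` contains a spanning tree
of the grid graph. -/
theorem controlling_iff_spanning_connected {m n : ℕ} [NeZero m] [NeZero n]
    (F : Set (Sym2 (Fin m × Fin n))) (hFE : F ⊆ GridEdges m n) :
    (∀ c : Fin m × Fin n → ZMod 3, IsProperColoring c → IsForcing c F) ↔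
      (spanningSubgraph F).Connected := by
  classical
  constructor
  · intro hctrl
    have hreach : ∀ w, (spanningSubgraph F).Reachable (0, 0) w := by
      by_contra hnot
      push_neg at hnot
      obtain ⟨b, hb⟩ := hnot
      set B : Set (Fin m × Fin n) :=
        {w | ¬ (spanningSubgraph F).Reachable (0, 0) w} with hBdef
      have hbB : b ∈ B := hb
      have hB : B.Nonempty := ⟨b, hbB⟩
      have h00 : (0, 0) ∉ B := fun h => h (SimpleGraph.Reachable.refl _)
      have hbase : gcol' B (0, 0) = gcol B (0, 0) := by
        unfold gcol'; rw [if_neg h00, add_zero]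
      have hdiff : ∀ u v : Fin m × Fin n, GridAdj u v → s(u, v) ∈ F →
          gcol' B v - gcol' B u = gcol B v - gcol B u := by
        intro u v hadj hF
        have hr : (spanningSubgraph F).Reachable u v :=
          (SimpleGraph.Adj.reachable ⟨hadj, hF⟩)
        have huv : u ∈ B ↔ v ∈ B := by
          constructor
          · intro hu hRv; exact hu (hRv.trans hr.symm)
          · intro hv hRu; exact hv (hRu.trans hr)
        unfold gcol'
        by_cases hu : u ∈ B
        · rw [if_pos hu, if_pos (huv.mp hu)]; ring
        · rw [if_neg hu, if_neg (fun h => hu (huv.mpr h))]; ring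
      have hEq := hctrl (gcol B) (gcol_proper hB) (gcol' B) (gcol'_proper hB) hbase hdiff
      have hb2 := congrFun hEq b
      unfold gcol' at hb2
      rw [if_pos hbB] at hb2
      exact (by decide : ∀ x : ZMod 3, x + 2 ≠ x) _ hb2
    rw [SimpleGraph.connected_iff]
    exact ⟨fun u v => (hreach u).symm.trans (hreach v), ⟨(0, 0)⟩⟩
  · intro hconn c hc c' hc' hbase hdiff
    funext v
    have key : ∀ {a b : Fin m × Fin n} (_ : (spanningSubgraph F).Walk a b),
        c' b - c b = c' a - c a := by
      intro a b w
      induction w with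
      | nil => rfl
      | @cons x y z hadj' w' ih =>
        have hd := hdiff x y hadj'.1 hadj'.2
        rw [ih]
        linear_combination hd
    obtain ⟨w⟩ := hconn.preconnected (0, 0) v
    have h0 : c' v - c v = 0 := by rw [key w, hbase]; ring
    exact sub_eq_zero.mp h0
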